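/- Let G be a spider graph with p ≥ 1 paths attached to the center in which every attached path has an odd number of vertices, and let N_e be the number of vertices of G at even positive level. Then there exists a labeling of G with differential value at least N_e + 1; consequently the differential chromatic number of G equals N_e + 1. -/
import Mathlib


/-- A labeling of the vertices of a finite graph on `n` vertices: a one-to-one
assignment of the numbers `1, …, n` to the vertices. -/
def IsLabeling {V : Type*} [Fintype V] (c : V → ℕ) : Prop :=
  Function.Injective c ∧ ∀ v, c v ∈ Finset.Icc 1 (Fintype.card V)

/-- The differential value of the labeling `c` is at least `d`: every edge has
label difference at least `d`. -/
def DiffValAtLeast {V : Type*} (G : SimpleGraph V) (c : V → ℕ) (d : ℕ) : Prop :=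
  ∀ u v, G.Adj u v → d ≤ Nat.dist (c u) (c v)

/-- The differential chromatic number: the maximum, over all labelings, of the
minimum label difference over the edges. -/
noncomputable def diffChromNum {V : Type*} [Fintype V] (G : SimpleGraph V) : ℕ :=
  sSup {d : ℕ | ∃ c : V → ℕ, IsLabeling c ∧ DiffValAtLeast G c d}

/-- The spider graph with center `none` and `p` attached paths, the `i`-th path
having `ℓ i` vertices `some ⟨i, j⟩` (the vertex `some ⟨i, j⟩` is at level `j + 1`,
i.e. at distance `j + 1` from the center). -/
def spider (p : ℕ) (ℓ : Fin p → ℕ) : SimpleGraph (Option (Σ i : Fin p, Fin (ℓ i))) :=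
  SimpleGraph.fromRel (fun a b =>
    (a = none ∧ ∃ (i : Fin p) (h : 0 < ℓ i), b = some ⟨i, ⟨0, h⟩⟩) ∨
    (∃ (i : Fin p) (x y : Fin (ℓ i)), (x : ℕ) + 1 = (y : ℕ) ∧
      a = some ⟨i, x⟩ ∧ b = some ⟨i, y⟩))

/-- The number of vertices of the spider at even positive level (the vertex
`some ⟨i, j⟩` is at level `j + 1`). -/
def spiderNe (p : ℕ) (ℓ : Fin p → ℕ) : ℕ :=
  (Finset.univ.filter (fun v : Σ i : Fin p, Fin (ℓ i) => (v.2 : ℕ) % 2 = 1)).card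

/-- The number of vertices of the spider at odd level. -/
def spiderNo (p : ℕ) (ℓ : Fin p → ℕ) : ℕ :=
  (Finset.univ.filter (fun v : Σ i : Fin p, Fin (ℓ i) => (v.2 : ℕ) % 2 = 0)).card

namespace Stmt9

variable {p : ℕ} (ℓ : Fin p → ℕ)

def off (i : Fin p) : ℕ := ∑ i' ∈ Finset.univ.filter (fun i' => i' < i), ℓ i' / 2

lemma card_odd_range (m : ℕ) : ((Finset.range m).filter (fun j => j % 2 = 1)).card = m / 2 := by
  induction m with
  | zero => simp
  | succ n ih =>
    rw [Finset.range_add_one, Finset.filter_insert]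
    split_ifs with h
    · rw [Finset.card_insert_of_notMem (by simp), ih]; omega
    · rw [ih]; omega

lemma card_even_range (m : ℕ) : ((Finset.range m).filter (fun j => j % 2 = 0)).card = (m + 1) / 2 := by
  induction m with
  | zero => simp
  | succ n ih =>
    rw [Finset.range_add_one, Finset.filter_insert]
    split_ifs with h
    · rw [Finset.card_insert_of_notMem (by simp), ih]; omega
    · rw [ih]; omega

lemma card_fin_filter (m : ℕ) (P : ℕ → Prop) [DecidablePred P] :
    (Finset.univ.filter (fun j : Fin m => P (j : ℕ))).card = ((Finset.range m).filter P).card := by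
  have himg : ((Finset.range m).filter P)
      = (Finset.univ.filter (fun j : Fin m => P (j : ℕ))).image (fun j : Fin m => (j : ℕ)) := by
    ext b
    simp only [Finset.mem_filter, Finset.mem_range, Finset.mem_image, Finset.mem_univ, true_and]
    constructor
    · rintro ⟨hb, hP⟩; exact ⟨⟨b, hb⟩, hP, rfl⟩
    · rintro ⟨a, hP, rfl⟩; exact ⟨a.isLt, hP⟩
  rw [himg, Finset.card_image_of_injective _ Fin.val_injective]

lemma spiderNe_eq : spiderNe p ℓ = ∑ i, ℓ i / 2 := by
  unfold spiderNe
  have h : (Finset.univ.filter (fun v : Σ i : Fin p, Fin (ℓ i) => (v.2 : ℕ) % 2 = 1))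
      = Finset.univ.sigma (fun i => Finset.univ.filter (fun j : Fin (ℓ i) => (j : ℕ) % 2 = 1)) := by
    ext ⟨i, j⟩
    simp [Finset.mem_sigma]
  rw [h, Finset.card_sigma]
  exact Finset.sum_congr rfl (fun i _ => (card_fin_filter (ℓ i) (fun n => n % 2 = 1)).trans (card_odd_range (ℓ i)))

lemma spiderNo_eq : spiderNo p ℓ = ∑ i, (ℓ i + 1) / 2 := by
  unfold spiderNo
  have h : (Finset.univ.filter (fun v : Σ i : Fin p, Fin (ℓ i) => (v.2 : ℕ) % 2 = 0))
      = Finset.univ.sigma (fun i => Finset.univ.filter (fun j : Fin (ℓ i) => (j : ℕ) % 2 = 0)) := by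
    ext ⟨i, j⟩
    simp [Finset.mem_sigma]
  rw [h, Finset.card_sigma]
  exact Finset.sum_congr rfl (fun i _ => (card_fin_filter (ℓ i) (fun n => n % 2 = 0)).trans (card_even_range (ℓ i)))

lemma spiderNo_eq' (hodd : ∀ i, Odd (ℓ i)) : spiderNo p ℓ = spiderNe p ℓ + p := by
  rw [spiderNe_eq, spiderNo_eq]
  have h1 : ∀ i ∈ Finset.univ, (ℓ i + 1) / 2 = ℓ i / 2 + 1 := fun i _ => by
    have := hodd i; rw [Nat.odd_iff] at this; omega
  rw [Finset.sum_congr rfl h1, Finset.sum_add_distrib]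
  simp

lemma sum_ell (hodd : ∀ i, Odd (ℓ i)) : ∑ i, ℓ i = 2 * spiderNe p ℓ + p := by
  rw [spiderNe_eq, Finset.mul_sum]
  have h1 : ∀ i ∈ Finset.univ, ℓ i = 2 * (ℓ i / 2) + 1 := fun i _ => by
    have := hodd i; rw [Nat.odd_iff] at this; omega
  rw [Finset.sum_congr rfl h1, Finset.sum_add_distrib]
  simp

lemma cardV (hodd : ∀ i, Odd (ℓ i)) :
    Fintype.card (Option (Σ i : Fin p, Fin (ℓ i))) = 2 * spiderNe p ℓ + p + 1 := by
  rw [Fintype.card_option]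
  have h2 : Fintype.card (Σ i : Fin p, Fin (ℓ i)) = ∑ i, ℓ i := by
    simp [Fintype.card_sigma]
  rw [h2, sum_ell ℓ hodd]

lemma off_le_Ne (i : Fin p) : off ℓ i + ℓ i / 2 ≤ spiderNe p ℓ := by
  rw [spiderNe_eq]
  have h2 : i ∉ Finset.univ.filter (fun i' => i' < i) := by simp
  have h := Finset.sum_le_sum_of_subset (f := fun i' => ℓ i' / 2)
    (Finset.subset_univ (insert i (Finset.univ.filter (fun i' => i' < i))))
  rw [Finset.sum_insert h2] at h
  beta_reduce at h
  unfold off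
  omega

lemma off_mono {i i' : Fin p} (h : i < i') : off ℓ i + ℓ i / 2 ≤ off ℓ i' := by
  have h2 : i ∉ Finset.univ.filter (fun i'' => i'' < i) := by simp
  have hsub : insert i (Finset.univ.filter (fun i'' => i'' < i))
      ⊆ Finset.univ.filter (fun i'' => i'' < i') := by
    intro a ha
    simp only [Finset.mem_insert, Finset.mem_filter, Finset.mem_univ, true_and] at *
    rcases ha with rfl | ha
    · exact h
    · exact lt_trans ha h
  have := Finset.sum_le_sum_of_subset (f := fun i'' => ℓ i'' / 2) hsub
  rw [Finset.sum_insert h2] at this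
  beta_reduce at this
  unfold off
  omega


def lab (p : ℕ) (ℓ : Fin p → ℕ) : Option (Σ i : Fin p, Fin (ℓ i)) → ℕ := fun v =>
  match v with
  | none => spiderNo p ℓ + 1
  | some ⟨i, j⟩ =>
      if (j : ℕ) = 0 then (i : ℕ) + 1
      else if (j : ℕ) % 2 = 1 then spiderNo p ℓ + 1 + (off ℓ i + ((j : ℕ) + 1) / 2)
      else p + (off ℓ i + ((j : ℕ) + 1) / 2)

lemma mk_some_eq {i i' : Fin p} {j : Fin (ℓ i)} {j' : Fin (ℓ i')}
    (hi : i = i') (hj : (j : ℕ) = (j' : ℕ)) :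
    (some ⟨i, j⟩ : Option (Σ i : Fin p, Fin (ℓ i))) = some ⟨i', j'⟩ := by
  subst hi
  exact congrArg some (congrArg (Sigma.mk i) (Fin.ext hj))

lemma adj_center (i : Fin p) (h0 : 0 < ℓ i) :
    (spider p ℓ).Adj none (some ⟨i, ⟨0, h0⟩⟩) := by
  refine (SimpleGraph.fromRel_adj _ _ _).mpr ⟨by simp, Or.inl (Or.inl ⟨rfl, i, h0, rfl⟩)⟩

lemma adj_step {i : Fin p} {x y : Fin (ℓ i)} (h : (x : ℕ) + 1 = (y : ℕ)) :
    (spider p ℓ).Adj (some ⟨i, x⟩) (some ⟨i, y⟩) := by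
  refine (SimpleGraph.fromRel_adj _ _ _).mpr ⟨?_, Or.inl (Or.inr ⟨i, x, y, h, rfl, rfl⟩)⟩
  intro hc
  injection hc with hc1
  injection hc1 with hA hB
  have : (x : ℕ) = (y : ℕ) := congrArg Fin.val hB
  omega

lemma class_eq (hodd : ∀ i, Odd (ℓ i)) {i i' : Fin p} {j : Fin (ℓ i)} {j' : Fin (ℓ i')}
    (hj : 1 ≤ (j : ℕ)) (hj' : 1 ≤ (j' : ℕ)) (hpar : (j : ℕ) % 2 = (j' : ℕ) % 2)
    (h : off ℓ i + ((j : ℕ) + 1) / 2 = off ℓ i' + ((j' : ℕ) + 1) / 2) :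
    (some ⟨i, j⟩ : Option (Σ i : Fin p, Fin (ℓ i))) = some ⟨i', j'⟩ := by
  have hlt1 : (j : ℕ) < ℓ i := j.isLt
  have hlt2 : (j' : ℕ) < ℓ i' := j'.isLt
  rcases lt_trichotomy i i' with hlt | rfl | hlt
  · exfalso
    have hm := off_mono ℓ hlt
    omega
  · exact mk_some_eq ℓ rfl (by omega)
  · exfalso
    have hm := off_mono ℓ hlt
    omega

lemma lab_inj (hodd : ∀ i, Odd (ℓ i)) : Function.Injective (lab p ℓ) := by
  have hNo : spiderNo p ℓ = spiderNe p ℓ + p := spiderNo_eq' ℓ hodd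
  intro a b hab
  rcases a with _ | ⟨i, j⟩ <;> rcases b with _ | ⟨i', j'⟩
  · rfl
  · exfalso
    have hoff2 := off_le_Ne ℓ i'
    have hlt2 : (j' : ℕ) < ℓ i' := j'.isLt
    have hi2 : (i' : ℕ) < p := i'.isLt
    simp only [lab] at hab
    split_ifs at hab <;> omega
  · exfalso
    have hoff1 := off_le_Ne ℓ i
    have hlt1 : (j : ℕ) < ℓ i := j.isLt
    have hi1 : (i : ℕ) < p := i.isLt
    simp only [lab] at hab
    split_ifs at hab <;> omega
  · have hoff1 := off_le_Ne ℓ i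
    have hoff2 := off_le_Ne ℓ i'
    have hlt1 : (j : ℕ) < ℓ i := j.isLt
    have hlt2 : (j' : ℕ) < ℓ i' := j'.isLt
    have hi1 : (i : ℕ) < p := i.isLt
    have hi2 : (i' : ℕ) < p := i'.isLt
    simp only [lab] at hab
    split_ifs at hab with h1 h2 h3 h4 h5 h6 h7 h8 h9
    all_goals first
      | (exact mk_some_eq ℓ (Fin.ext (by omega)) (by omega))
      | (exact class_eq ℓ hodd (by omega) (by omega) (by omega) (by omega))
      | (exfalso; omega)

lemma lab_isLabeling (hodd : ∀ i, Odd (ℓ i)) : IsLabeling (lab p ℓ) := by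
  have hNo : spiderNo p ℓ = spiderNe p ℓ + p := spiderNo_eq' ℓ hodd
  refine ⟨lab_inj ℓ hodd, ?_⟩
  intro v
  rw [cardV ℓ hodd, Finset.mem_Icc]
  rcases v with _ | ⟨i, j⟩
  · simp only [lab]; omega
  · have hoff1 := off_le_Ne ℓ i
    have hlt1 : (j : ℕ) < ℓ i := j.isLt
    have hi1 : (i : ℕ) < p := i.isLt
    simp only [lab]
    split_ifs <;> omega

lemma lab_diff (hodd : ∀ i, Odd (ℓ i)) :
    DiffValAtLeast (spider p ℓ) (lab p ℓ) (spiderNe p ℓ + 1) := by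
  have hNo : spiderNo p ℓ = spiderNe p ℓ + p := spiderNo_eq' ℓ hodd
  have key : ∀ a b : Option (Σ i : Fin p, Fin (ℓ i)),
      ((a = none ∧ ∃ (i : Fin p) (h : 0 < ℓ i), b = some ⟨i, ⟨0, h⟩⟩) ∨
        (∃ (i : Fin p) (x y : Fin (ℓ i)), (x : ℕ) + 1 = (y : ℕ) ∧
          a = some ⟨i, x⟩ ∧ b = some ⟨i, y⟩)) →
      spiderNe p ℓ + 1 ≤ Nat.dist (lab p ℓ a) (lab p ℓ b) := by
    rintro a b (⟨rfl, i, h0, rfl⟩ | ⟨i, x, y, hxy, rfl, rfl⟩)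
    · have hi1 : (i : ℕ) < p := i.isLt
      have hv : lab p ℓ (some ⟨i, ⟨0, h0⟩⟩) = (i : ℕ) + 1 := rfl
      have hv2 : lab p ℓ none = spiderNo p ℓ + 1 := rfl
      rw [hv, hv2, Nat.dist]
      omega
    · have hoff1 := off_le_Ne ℓ i
      have hltx : (x : ℕ) < ℓ i := x.isLt
      have hlty : (y : ℕ) < ℓ i := y.isLt
      have hi1 : (i : ℕ) < p := i.isLt
      have hy0 : ¬ ((y : ℕ) = 0) := by omega
      simp only [lab, Nat.dist]
      split_ifs <;> omega
  intro u v huv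
  obtain ⟨hne, h | h⟩ := (SimpleGraph.fromRel_adj _ _ _).mp huv
  · exact key u v h
  · rw [Nat.dist_comm]; exact key v u h


lemma flip_ok {d : ℕ} {c : Option (Σ i : Fin p, Fin (ℓ i)) → ℕ}
    (hc : IsLabeling c) (hd : DiffValAtLeast (spider p ℓ) c d) :
    IsLabeling (fun v => Fintype.card (Option (Σ i : Fin p, Fin (ℓ i))) + 1 - c v) ∧
    DiffValAtLeast (spider p ℓ) (fun v => Fintype.card (Option (Σ i : Fin p, Fin (ℓ i))) + 1 - c v) d := by
  obtain ⟨hinj, hmem⟩ := hc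
  refine ⟨⟨?_, ?_⟩, ?_⟩
  · intro a b hab
    have ha := Finset.mem_Icc.mp (hmem a)
    have hb := Finset.mem_Icc.mp (hmem b)
    have hab' : Fintype.card (Option (Σ i : Fin p, Fin (ℓ i))) + 1 - c a
        = Fintype.card (Option (Σ i : Fin p, Fin (ℓ i))) + 1 - c b := hab
    exact hinj (by omega)
  · intro v
    have hv := Finset.mem_Icc.mp (hmem v)
    show Fintype.card (Option (Σ i : Fin p, Fin (ℓ i))) + 1 - c v ∈
      Finset.Icc 1 (Fintype.card (Option (Σ i : Fin p, Fin (ℓ i))))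
    exact Finset.mem_Icc.mpr (by omega)
  · intro u v huv
    have h1 := hd u v huv
    have hu := Finset.mem_Icc.mp (hmem u)
    have hv := Finset.mem_Icc.mp (hmem v)
    show d ≤ Nat.dist (Fintype.card (Option (Σ i : Fin p, Fin (ℓ i))) + 1 - c u)
      (Fintype.card (Option (Σ i : Fin p, Fin (ℓ i))) + 1 - c v)
    simp only [Nat.dist] at h1 ⊢
    omega

lemma center_cases (hp : 1 ≤ p) (hℓ : ∀ i, 1 ≤ ℓ i) (hodd : ∀ i, Odd (ℓ i))
    {c : Option (Σ i : Fin p, Fin (ℓ i)) → ℕ} (hc : IsLabeling c)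
    (hd : DiffValAtLeast (spider p ℓ) c (spiderNe p ℓ + 2)) :
    c none ≤ spiderNe p ℓ ∨ spiderNe p ℓ + p + 2 ≤ c none := by
  have hn := cardV ℓ hodd
  set K := spiderNe p ℓ with hK
  clear_value K
  by_contra hcon
  push_neg at hcon
  obtain ⟨h1, h2⟩ := hcon
  set g : Fin p → ℕ := fun i => c (some ⟨i, ⟨0, hℓ i⟩⟩) with hg
  have hginj : Function.Injective g := by
    intro a b hab
    have := hc.1 hab
    injection this with h3
    injection h3
  have hcard : (Finset.image g Finset.univ).card = p := by
    rw [Finset.card_image_of_injective _ hginj, Finset.card_univ, Fintype.card_fin]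
  have hsub : Finset.image g Finset.univ ⊆
      Finset.Icc 1 (c none - (K + 2)) ∪ Finset.Icc (c none + (K + 2)) (2 * K + p + 1) := by
    intro m hm
    obtain ⟨i, -, rfl⟩ := Finset.mem_image.mp hm
    have hdist := hd _ _ (adj_center ℓ i (hℓ i))
    have hmem := Finset.mem_Icc.mp (hc.2 (some ⟨i, ⟨0, hℓ i⟩⟩))
    rw [hn] at hmem
    simp only [Nat.dist] at hdist
    simp only [Finset.mem_union, Finset.mem_Icc, hg]
    omega
  have hle := (Finset.card_le_card hsub).trans (Finset.card_union_le _ _)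
  rw [hcard, Nat.card_Icc, Nat.card_Icc] at hle
  have hxn : c none ≤ 2 * K + p + 1 := by
    have := Finset.mem_Icc.mp (hc.2 none); omega
  have hx1 : 1 ≤ c none := (Finset.mem_Icc.mp (hc.2 none)).1
  omega

lemma main_low (hp : 1 ≤ p) (hℓ : ∀ i, 1 ≤ ℓ i) (hodd : ∀ i, Odd (ℓ i))
    {c : Option (Σ i : Fin p, Fin (ℓ i)) → ℕ} (hc : IsLabeling c)
    (hd : DiffValAtLeast (spider p ℓ) c (spiderNe p ℓ + 2))
    (hx : c none ≤ spiderNe p ℓ) : False := by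
  have hn := cardV ℓ hodd
  set K := spiderNe p ℓ with hK
  clear_value K
  have hx1 : 1 ≤ c none := (Finset.mem_Icc.mp (hc.2 none)).1
  -- surjectivity
  have himg : Finset.image c Finset.univ = Finset.Icc 1 (2 * K + p + 1) := by
    apply Finset.eq_of_subset_of_card_le
    · intro m hm
      obtain ⟨v, -, rfl⟩ := Finset.mem_image.mp hm
      have := hc.2 v
      rwa [hn] at this
    · rw [Nat.card_Icc, Finset.card_image_of_injective _ hc.1, Finset.card_univ, hn]
      omega
  have hsurj : ∀ m, 1 ≤ m → m ≤ 2 * K + p + 1 → ∃ v, c v = m := by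
    intro m hm1 hm2
    have : m ∈ Finset.image c Finset.univ := by
      rw [himg]; exact Finset.mem_Icc.mpr ⟨hm1, hm2⟩
    obtain ⟨v, -, hv⟩ := Finset.mem_image.mp this
    exact ⟨v, hv⟩
  -- the label window
  set T := (Finset.Icc 1 (K + 2)).erase (c none) with hT
  have hTcard : T.card = K + 1 := by
    rw [hT, Finset.card_erase_of_mem (Finset.mem_Icc.mpr ⟨hx1, by omega⟩), Nat.card_Icc]
    omega
  set U := Finset.univ.filter (fun v => c v ∈ T) with hU
  have hUimg : U.image c = T := by
    ext m
    simp only [hU, Finset.mem_image, Finset.mem_filter, Finset.mem_univ, true_and]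
    constructor
    · rintro ⟨v, hv, rfl⟩; exact hv
    · intro hm
      have hm' := Finset.mem_Icc.mp (Finset.mem_of_mem_erase hm)
      obtain ⟨v, rfl⟩ := hsurj m hm'.1 (by omega)
      exact ⟨v, hm, rfl⟩
  have hUcard : U.card = K + 1 := by
    rw [← hTcard, ← hUimg, Finset.card_image_of_injective _ hc.1]
  have hTbound : ∀ v ∈ U, 1 ≤ c v ∧ c v ≤ K + 2 ∧ c v ≠ c none := by
    intro v hv
    have hvT : c v ∈ T := (Finset.mem_filter.mp hv).2
    have := Finset.mem_Icc.mp (Finset.mem_of_mem_erase hvT)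
    exact ⟨this.1, this.2, Finset.ne_of_mem_erase hvT⟩
  have hUmem : ∀ v ∈ U, ∃ (i : Fin p) (j : Fin (ℓ i)), v = some ⟨i, j⟩ ∧ 1 ≤ (j : ℕ) := by
    intro v hv
    obtain ⟨hb1, hb2, hb3⟩ := hTbound v hv
    match v with
    | none => exact absurd rfl hb3
    | some ⟨i, j⟩ =>
      refine ⟨i, j, rfl, ?_⟩
      by_contra h0
      have hj0 : (j : ℕ) = 0 := by omega
      obtain rfl : j = ⟨0, hℓ i⟩ := Fin.ext hj0
      have hdist := hd _ _ (adj_center ℓ i (hℓ i))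
      simp only [Nat.dist] at hdist
      omega
  -- inject U into the small sigma set
  set Φ := Finset.univ.sigma (fun i : Fin p => Finset.range (ℓ i / 2)) with hΦ
  have hΦcard : Φ.card = K := by
    rw [hΦ, Finset.card_sigma]
    simp only [Finset.card_range]
    rw [hK]
    exact (spiderNe_eq ℓ).symm
  have hp0 : 0 < p := hp
  set f : Option (Σ i : Fin p, Fin (ℓ i)) → (Σ _ : Fin p, ℕ) := fun v =>
    match v with
    | none => ⟨⟨0, hp0⟩, 0⟩
    | some ⟨i, j⟩ => ⟨i, ((j : ℕ) - 1) / 2⟩ with hf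
  have hmaps : ∀ v ∈ U, f v ∈ Φ := by
    intro v hv
    obtain ⟨i, j, rfl, hj⟩ := hUmem v hv
    have hjlt : (j : ℕ) < ℓ i := j.isLt
    have hoddi := hodd i
    rw [Nat.odd_iff] at hoddi
    simp only [hf, hΦ, Finset.mem_sigma, Finset.mem_univ, Finset.mem_range, true_and]
    omega
  have hinjU : Set.InjOn f U := by
    intro u hu v hv hfeq
    obtain ⟨i, j, rfl, hj⟩ := hUmem u hu
    obtain ⟨i', j', rfl, hj'⟩ := hUmem v hv
    obtain ⟨hc1u, hc2u, -⟩ := hTbound _ hu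
    obtain ⟨hc1v, hc2v, -⟩ := hTbound _ hv
    simp only [hf] at hfeq
    injection hfeq with hA hB
    subst hA
    have hB' : ((j : ℕ) - 1) / 2 = ((j' : ℕ) - 1) / 2 := hB
    rcases Nat.lt_trichotomy (j : ℕ) (j' : ℕ) with hlt | heq | hlt
    · exfalso
      have hy : (j : ℕ) + 1 = (j' : ℕ) := by omega
      have hdist := hd _ _ (adj_step ℓ hy)
      simp only [Nat.dist] at hdist
      omega
    · exact mk_some_eq ℓ rfl heq
    · exfalso
      have hy : (j' : ℕ) + 1 = (j : ℕ) := by omega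
      have hdist := hd _ _ (adj_step ℓ hy)
      simp only [Nat.dist] at hdist
      omega
  have hfin := Finset.card_le_card_of_injOn f hmaps hinjU
  rw [hUcard, hΦcard] at hfin
  omega

lemma ub (hp : 1 ≤ p) (hℓ : ∀ i, 1 ≤ ℓ i) (hodd : ∀ i, Odd (ℓ i)) :
    ∀ d ∈ {d : ℕ | ∃ c : Option (Σ i : Fin p, Fin (ℓ i)) → ℕ,
      IsLabeling c ∧ DiffValAtLeast (spider p ℓ) c d}, d ≤ spiderNe p ℓ + 1 := by
  rintro d ⟨c, hc, hd⟩
  by_contra hcon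
  push_neg at hcon
  have hd2 : DiffValAtLeast (spider p ℓ) c (spiderNe p ℓ + 2) :=
    fun u v h => le_trans (by omega) (hd u v h)
  rcases center_cases ℓ hp hℓ hodd hc hd2 with hxc | hxc
  · exact main_low ℓ hp hℓ hodd hc hd2 hxc
  · obtain ⟨hc', hd2'⟩ := flip_ok ℓ hc hd2
    apply main_low ℓ hp hℓ hodd hc' hd2'
    have hn := cardV ℓ hodd
    have hxn := Finset.mem_Icc.mp (hc.2 none)
    show Fintype.card (Option (Σ i : Fin p, Fin (ℓ i))) + 1 - c none ≤ spiderNe p ℓ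
    omega

end Stmt9

/-- A spider graph with `p ≥ 1` attached paths, each having an odd number of
vertices, admits a labeling of differential value at least `N_e + 1`, and its
differential chromatic number equals `N_e + 1`. -/
theorem stmt_9 (p : ℕ) (hp : 1 ≤ p) (ℓ : Fin p → ℕ) (hℓ : ∀ i, 1 ≤ ℓ i)
    (hodd : ∀ i, Odd (ℓ i)) :
    (∃ c : Option (Σ i : Fin p, Fin (ℓ i)) → ℕ, IsLabeling c ∧
      DiffValAtLeast (spider p ℓ) c (spiderNe p ℓ + 1)) ∧
    diffChromNum (spider p ℓ) = spiderNe p ℓ + 1 := by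
  have hconstr : ∃ c : Option (Σ i : Fin p, Fin (ℓ i)) → ℕ, IsLabeling c ∧
      DiffValAtLeast (spider p ℓ) c (spiderNe p ℓ + 1) :=
    ⟨Stmt9.lab p ℓ, Stmt9.lab_isLabeling ℓ hodd, Stmt9.lab_diff ℓ hodd⟩
  refine ⟨hconstr, ?_⟩
  have hub := Stmt9.ub ℓ hp hℓ hodd
  apply le_antisymm
  · exact csSup_le ⟨spiderNe p ℓ + 1, hconstr⟩ hub
  · exact le_csSup ⟨spiderNe p ℓ + 1, hub⟩ hconstr
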